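/- Let C be a real n×n matrix, A a real m×n matrix, r₁ ∈ ℝⁿ, and N a real n×q matrix that is a null-space basis of A (z ↦ N·z is injective and its range equals the kernel of x ↦ A·x). Then for every Δx ∈ ℝⁿ the following are equivalent: (i) A·Δx = 0 and there exists Δλ ∈ ℝᵐ with C·Δx − Aᵀ·Δλ = r₁; (ii) there exists Δz ∈ ℝ^q with Δx = N·Δz and (Nᵀ·C·N)·Δz = Nᵀ·r₁. In other words, the augmented system [C −Aᵀ; −A 0]·[Δx; Δλ] = [r₁; 0] is solved exactly by the solutions of the projected normal equations Nᵀ·C·N·Δz = Nᵀ·r₁ via the change of variables Δx = N·Δz. -/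

import Mathlib

open Matrix

/-- `N` is a null-space basis of `A` if `z ↦ N·z` is injective and its range
equals the kernel of `x ↦ A·x`. -/
def IsNullSpaceBasis {m n q : ℕ} (A : Matrix (Fin m) (Fin n) ℝ)
    (N : Matrix (Fin n) (Fin q) ℝ) : Prop :=
  Function.Injective (fun z : Fin q → ℝ => N *ᵥ z) ∧
    ∀ x : Fin n → ℝ, A *ᵥ x = 0 ↔ ∃ z : Fin q → ℝ, x = N *ᵥ z

lemma range_adjoint_eq_orthogonal_ker {E F : Type*}
    [NormedAddCommGroup E] [InnerProductSpace ℝ E] [FiniteDimensional ℝ E]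
    [NormedAddCommGroup F] [InnerProductSpace ℝ F] [FiniteDimensional ℝ F]
    (f : E →ₗ[ℝ] F) :
    LinearMap.range (LinearMap.adjoint f) = (LinearMap.ker f)ᗮ := by
  have h : (LinearMap.range (LinearMap.adjoint f))ᗮ = LinearMap.ker f := by
    ext x
    constructor
    · intro hx
      have : ∀ y : F, inner ℝ (f x) y = (0 : ℝ) := by
        intro y
        have := hx (LinearMap.adjoint f y) ⟨y, rfl⟩
        rw [real_inner_comm] at this
        rwa [LinearMap.adjoint_inner_right] at this
      exact LinearMap.mem_ker.mpr (inner_self_eq_zero.mp (this (f x)))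
    · intro hx u hu
      obtain ⟨y, rfl⟩ := hu
      rw [LinearMap.adjoint_inner_left, LinearMap.mem_ker.mp hx, inner_zero_right]
  rw [← h, Submodule.orthogonal_orthogonal]

lemma exists_transpose_mulVec {m n : ℕ} (A : Matrix (Fin m) (Fin n) ℝ) (v : Fin n → ℝ)
    (h : ∀ x, A *ᵥ x = 0 → v ⬝ᵥ x = 0) : ∃ w, Aᵀ *ᵥ w = v := by
  set f := Matrix.toEuclideanLin A with hf
  have hv : ((WithLp.equiv 2 (Fin n → ℝ)).symm v) ∈ (LinearMap.ker f)ᗮ := by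
    intro u hu
    have hAu : A *ᵥ (WithLp.equiv 2 (Fin n → ℝ)) u = 0 := by
      have := LinearMap.mem_ker.mp hu
      have := congrArg (WithLp.equiv 2 (Fin m → ℝ)) this
      simpa [hf, Matrix.toEuclideanLin_apply] using this
    have hinner : (inner ℝ u ((WithLp.equiv 2 (Fin n → ℝ)).symm v) : ℝ)
        = v ⬝ᵥ (WithLp.equiv 2 (Fin n → ℝ)) u := by
      simp only [PiLp.inner_apply, RCLike.inner_apply, conj_trivial, dotProduct]
      exact Finset.sum_congr rfl fun i _ => rfl
    rw [hinner]
    exact h _ hAu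
  rw [← range_adjoint_eq_orthogonal_ker] at hv
  obtain ⟨w, hw⟩ := hv
  refine ⟨(WithLp.equiv 2 (Fin m → ℝ)) w, ?_⟩
  have hadj : LinearMap.adjoint f = Matrix.toEuclideanLin Aᵀ := by
    have hAt : Aᴴ = Aᵀ := by ext i j; simp [Matrix.conjTranspose]
    rw [hf, ← Matrix.toEuclideanLin_conjTranspose_eq_adjoint, hAt]
  rw [hadj] at hw
  have := congrArg (WithLp.equiv 2 (Fin n → ℝ)) hw
  simpa [Matrix.toEuclideanLin_apply] using this

/-- Null-space-method reduction: `Δx` solves the augmented system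
`[C −Aᵀ; −A 0]·[Δx; Δlam] = [r₁; 0]` (for some `Δlam`) iff `Δx = N·Δz` for a solution
`Δz` of the projected normal equations `Nᵀ·C·N·Δz = Nᵀ·r₁`. -/
theorem augmented_iff_projected_normal_equations {m n q : ℕ}
    (C : Matrix (Fin n) (Fin n) ℝ) (A : Matrix (Fin m) (Fin n) ℝ)
    (r₁ : Fin n → ℝ) (N : Matrix (Fin n) (Fin q) ℝ)
    (hN : IsNullSpaceBasis A N)
    (Δx : Fin n → ℝ) :
    (A *ᵥ Δx = 0 ∧ ∃ Δlam : Fin m → ℝ, C *ᵥ Δx - Aᵀ *ᵥ Δlam = r₁) ↔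
      (∃ Δz : Fin q → ℝ, Δx = N *ᵥ Δz ∧ (Nᵀ * C * N) *ᵥ Δz = Nᵀ *ᵥ r₁) := by
  obtain ⟨hinj, hker⟩ := hN
  have hAN : A * N = 0 := by
    ext i j
    have h1 : A *ᵥ (N *ᵥ Pi.single j 1) = 0 := (hker _).mpr ⟨_, rfl⟩
    rw [Matrix.mulVec_mulVec] at h1
    have := congrFun h1 i
    simpa [Matrix.mulVec_single] using this
  constructor
  · rintro ⟨hA, Δlam, hC⟩
    obtain ⟨Δz, rfl⟩ := (hker Δx).mp hA
    refine ⟨Δz, rfl, ?_⟩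
    have := congrArg (fun v => Nᵀ *ᵥ v) hC
    simp only [Matrix.mulVec_sub] at this
    have h0 : Nᵀ *ᵥ (Aᵀ *ᵥ Δlam) = 0 := by
      rw [Matrix.mulVec_mulVec, ← Matrix.transpose_mul, hAN, Matrix.transpose_zero,
        Matrix.zero_mulVec]
    rw [h0, sub_zero, Matrix.mulVec_mulVec, Matrix.mulVec_mulVec] at this
    simpa [Matrix.mul_assoc] using this
  · rintro ⟨Δz, rfl, hz⟩
    constructor
    · rw [Matrix.mulVec_mulVec, hAN, Matrix.zero_mulVec]
    · -- need Δlam with C *ᵥ (N *ᵥ Δz) - Aᵀ *ᵥ Δlam = r₁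
      have hperp : ∀ x, A *ᵥ x = 0 → (C *ᵥ (N *ᵥ Δz) - r₁) ⬝ᵥ x = 0 := by
        intro x hx
        obtain ⟨z, rfl⟩ := (hker x).mp hx
        have key : Nᵀ *ᵥ (C *ᵥ (N *ᵥ Δz) - r₁) = 0 := by
          rw [Matrix.mulVec_sub, Matrix.mulVec_mulVec, Matrix.mulVec_mulVec,
            hz, sub_self]
        have : (C *ᵥ (N *ᵥ Δz) - r₁) ⬝ᵥ (N *ᵥ z)
            = (Nᵀ *ᵥ (C *ᵥ (N *ᵥ Δz) - r₁)) ⬝ᵥ z := by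
          rw [Matrix.dotProduct_mulVec, Matrix.mulVec_transpose]
        rw [this, key, zero_dotProduct]
      obtain ⟨w, hw⟩ := exists_transpose_mulVec A _ hperp
      exact ⟨w, by rw [hw]; abel⟩
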